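/- Let p ∈ ℝ[x_1,…,x_n] be multilinear (degree at most 1 in each variable). If there exist polynomials q_1, …, q_m ∈ ℝ[x_1,…,x_n] with deg q_j ≤ d for all j such that p - Σ_{j=1}^m q_j² belongs to the Boolean ideal I_n, then p belongs to the degree-2d truncated preordering T_{n,2d}(g). -/

import Mathlib

open MvPolynomial

/-- A polynomial is a sum of squares. -/
def IsSOS {n : ℕ} (p : MvPolynomial (Fin n) ℝ) : Prop :=
  ∃ (k : ℕ) (q : Fin k → MvPolynomial (Fin n) ℝ), p = ∑ j, (q j) ^ 2

/-- Membership in the degree-`2d` truncated preordering `T_{n,2d}(g)` generated by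
`g_i = x_i - x_i^2`, with `g_S = ∏_{i ∈ S} g_i`. -/
def InPreordering (n d : ℕ) (p : MvPolynomial (Fin n) ℝ) : Prop :=
  ∃ σ : Finset (Fin n) → MvPolynomial (Fin n) ℝ,
    (∀ S, IsSOS (σ S)) ∧
    (∀ S : Finset (Fin n),
      (σ S * ∏ i ∈ S, (X i - (X i) ^ 2)).totalDegree ≤ 2 * d) ∧
    p = ∑ S : Finset (Fin n), σ S * ∏ i ∈ S, (X i - (X i) ^ 2)

/-- The Boolean ideal `I_n = ⟨x_1² - x_1, …, x_n² - x_n⟩`. -/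
noncomputable def booleanIdeal (n : ℕ) : Ideal (MvPolynomial (Fin n) ℝ) :=
  Ideal.span (Set.range fun i : Fin n => (X i) ^ 2 - X i)

namespace BoolSOS
variable {n : ℕ}

noncomputable def mlExp (m : Fin n →₀ ℕ) : Fin n →₀ ℕ := m.mapRange (min 1) (by simp)

lemma mlExp_apply (m : Fin n →₀ ℕ) (i : Fin n) : mlExp m i = min 1 (m i) := rfl

noncomputable def mlred (f : MvPolynomial (Fin n) ℝ) : MvPolynomial (Fin n) ℝ :=
  AddMonoidAlgebra.mapDomain mlExp f

lemma mlred_monomial (m : Fin n →₀ ℕ) (a : ℝ) :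
    mlred (monomial m a) = monomial (mlExp m) a := by
  rw [mlred, ← single_eq_monomial, ← single_eq_monomial, AddMonoidAlgebra.mapDomain_single]

lemma mlred_add (f g : MvPolynomial (Fin n) ℝ) : mlred (f + g) = mlred f + mlred g :=
  AddMonoidAlgebra.mapDomain_add mlExp f g

lemma mlred_sub (f g : MvPolynomial (Fin n) ℝ) : mlred (f - g) = mlred f - mlred g :=
  map_sub (AddMonoidHom.mk' (AddMonoidAlgebra.mapDomain mlExp) (AddMonoidAlgebra.mapDomain_add mlExp)) f g

lemma mlred_sum {ι : Type*} (s : Finset ι) (f : ι → MvPolynomial (Fin n) ℝ) :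
    mlred (∑ i ∈ s, f i) = ∑ i ∈ s, mlred (f i) :=
  map_sum (AddMonoidHom.mk' (AddMonoidAlgebra.mapDomain mlExp) (AddMonoidAlgebra.mapDomain_add mlExp)) f s

lemma coeff_le_degreeOf {f : MvPolynomial (Fin n) ℝ} {m : Fin n →₀ ℕ}
    (hm : m ∈ f.support) (i : Fin n) : m i ≤ degreeOf i f := by
  rw [degreeOf_eq_sup i f]; exact Finset.le_sup (f := fun m => m i) hm

lemma mlExp_eq_self {m : Fin n →₀ ℕ} (h : ∀ i, m i ≤ 1) : mlExp m = m := by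
  ext i; simp [mlExp_apply, min_eq_right (h i)]

lemma mlred_of_multilinear {f : MvPolynomial (Fin n) ℝ} (h : ∀ i, degreeOf i f ≤ 1) :
    mlred f = f := by
  conv_lhs => rw [f.as_sum]
  rw [mlred_sum]
  conv_rhs => rw [f.as_sum]
  refine Finset.sum_congr rfl fun m hm => ?_
  rw [mlred_monomial, mlExp_eq_self fun i => le_trans (coeff_le_degreeOf hm i) (h i)]

lemma mlred_mul_gen (h : MvPolynomial (Fin n) ℝ) (i : Fin n) :
    mlred (h * ((X i) ^ 2 - X i)) = 0 := by
  induction h using MvPolynomial.induction_on' with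
  | add p q hp hq => rw [add_mul, mlred_add, hp, hq, add_zero]
  | monomial m a =>
    have h2 : (X i : MvPolynomial (Fin n) ℝ) ^ 2 = monomial (Finsupp.single i 2) 1 :=
      X_pow_eq_monomial
    have h1 : (X i : MvPolynomial (Fin n) ℝ) = monomial (Finsupp.single i 1) 1 := by
      rw [← pow_one (X i)]; exact X_pow_eq_monomial
    rw [mul_sub, h2, monomial_mul, mul_one]
    rw [h1]
    rw [monomial_mul, mul_one, mlred_sub, mlred_monomial, mlred_monomial]
    have : mlExp (m + Finsupp.single i 2) = mlExp (m + Finsupp.single i 1) := by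
      ext j
      rcases eq_or_ne j i with rfl | hj
      · simp [mlExp_apply]
      · simp [mlExp_apply, Finsupp.single_apply, hj.symm, (Ne.symm hj)]
    rw [this, sub_self]

lemma mlred_of_mem_ideal {f : MvPolynomial (Fin n) ℝ} (hf : f ∈ booleanIdeal n) :
    mlred f = 0 := by
  rw [booleanIdeal] at hf
  obtain ⟨c, rfl⟩ := (Submodule.mem_span_range_iff_exists_fun _).mp hf
  rw [mlred_sum]
  refine Finset.sum_eq_zero fun i _ => ?_
  simpa [smul_eq_mul] using mlred_mul_gen (c i) i

lemma gen_mem (i : Fin n) : (X i) ^ 2 - X i ∈ booleanIdeal n :=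
  Ideal.subset_span (Set.mem_range_self i)

lemma apply_le_sum (m : Fin n →₀ ℕ) (i : Fin n) : m i ≤ m.sum fun _ e => e := by
  by_cases h : i ∈ m.support
  · exact Finset.single_le_sum (fun _ _ => Nat.zero_le _) h
  · simp [Finsupp.notMem_support_iff.mp h]

lemma monomial_sub_mlred_mem (N : ℕ) :
    ∀ (m : Fin n →₀ ℕ), (m.sum fun _ e => e) ≤ N → ∀ a : ℝ,
      monomial m a - monomial (mlExp m) a ∈ booleanIdeal n := by
  induction N with
  | zero =>
    intro m hm a
    have hm0 : m = 0 := by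
      ext i
      have := apply_le_sum m i
      simp only [Nat.le_zero] at hm
      simp only [Finsupp.coe_zero, Pi.zero_apply]
      omega
    have : mlExp m = m := by subst hm0; ext i; simp [mlExp_apply]
    rw [this, sub_self]
    exact Ideal.zero_mem _
  | succ N ih =>
    intro m hm a
    by_cases hml : mlExp m = m
    · rw [hml, sub_self]; exact Ideal.zero_mem _
    · have hex : ∃ i, 2 ≤ m i := by
        by_contra hco
        push_neg at hco
        exact hml (mlExp_eq_self fun i => by have := hco i; omega)
      obtain ⟨i, hi⟩ := hex
      set m' : Fin n →₀ ℕ := m - Finsupp.single i 1 with hm'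
      have hmi : ∀ j, m' j = m j - Finsupp.single i 1 j := fun j => Finsupp.tsub_apply _ _ _
      have hdecomp : m = m' + Finsupp.single i 1 := by
        ext j
        rcases eq_or_ne j i with rfl | hj
        · simp [hmi]; omega
        · simp [hmi, Finsupp.single_apply, Ne.symm hj]
      have hsum : (m'.sum fun _ e => e) ≤ N := by
        have : (m.sum fun _ e => e) = (m'.sum fun _ e => e) + 1 := by
          conv_lhs => rw [hdecomp]
          rw [Finsupp.sum_add_index' (fun _ => rfl) (fun _ _ _ => rfl)]
          simp
        omega
      have key1 : monomial m a - monomial m' a ∈ booleanIdeal n := by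
        have heq : monomial m a - monomial m' a
            = monomial (m - Finsupp.single i 2) a * ((X i) ^ 2 - X i) := by
          rw [mul_sub, X_pow_eq_monomial, monomial_mul, mul_one]
          have h1 : (X i : MvPolynomial (Fin n) ℝ) = monomial (Finsupp.single i 1) 1 := by
            rw [← pow_one (X i)]; exact X_pow_eq_monomial
          rw [h1, monomial_mul, mul_one]
          have e2 : m - Finsupp.single i 2 + Finsupp.single i 2 = m := by
            ext j
            rcases eq_or_ne j i with rfl | hj
            · simp [Finsupp.tsub_apply]; omega
            · simp [Finsupp.tsub_apply, Finsupp.single_apply, Ne.symm hj]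
          have e1 : m - Finsupp.single i 2 + Finsupp.single i 1 = m' := by
            ext j
            rcases eq_or_ne j i with rfl | hj
            · simp [hmi, Finsupp.tsub_apply]; omega
            · simp [hmi, Finsupp.tsub_apply, Finsupp.single_apply, Ne.symm hj]
          rw [e2, e1]
        rw [heq]
        exact Ideal.mul_mem_left _ _ (gen_mem i)
      have key2 : mlExp m' = mlExp m := by
        ext j
        rcases eq_or_ne j i with rfl | hj
        · simp [mlExp_apply, hmi]; omega
        · simp [mlExp_apply, hmi, Finsupp.single_apply, Ne.symm hj]
      have := ih m' hsum a
      rw [key2] at this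
      have : monomial m a - monomial (mlExp m) a
          = (monomial m a - monomial m' a) + (monomial m' a - monomial (mlExp m) a) := by ring
      rw [this]
      exact Ideal.add_mem _ key1 (by rw [← key2]; exact ih m' hsum a)

lemma mlred_eq_sum (f : MvPolynomial (Fin n) ℝ) :
    mlred f = ∑ m ∈ f.support, monomial (mlExp m) (coeff m f) := by
  conv_lhs => rw [f.as_sum]
  rw [mlred_sum]
  exact Finset.sum_congr rfl fun m _ => mlred_monomial m _

lemma sub_mlred_mem (f : MvPolynomial (Fin n) ℝ) : f - mlred f ∈ booleanIdeal n := by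
  have : f - mlred f
      = ∑ m ∈ f.support, (monomial m (coeff m f) - monomial (mlExp m) (coeff m f)) := by
    rw [Finset.sum_sub_distrib, ← mlred_eq_sum, ← f.as_sum]
  rw [this]
  exact Ideal.sum_mem _ fun m _ => monomial_sub_mlred_mem _ m le_rfl _

lemma degreeOf_monomial_le (s : Fin n →₀ ℕ) (a : ℝ) (i : Fin n) :
    degreeOf i (monomial s a) ≤ s i := by
  rw [degreeOf_eq_sup]
  refine Finset.sup_le fun k hk => ?_
  rw [support_monomial] at hk
  split at hk
  · simp at hk
  · simp only [Finset.mem_singleton] at hk; subst hk; exact le_rfl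

lemma mlExp_sum_le (m : Fin n →₀ ℕ) :
    ((mlExp m).sum fun _ e => e) ≤ m.sum fun _ e => e := by
  rw [Finsupp.sum_fintype _ _ (fun _ => rfl), Finsupp.sum_fintype _ _ (fun _ => rfl)]
  exact Finset.sum_le_sum fun i _ => min_le_right _ _

lemma mlred_totalDegree_le (f : MvPolynomial (Fin n) ℝ) :
    (mlred f).totalDegree ≤ f.totalDegree := by
  rw [mlred_eq_sum]
  refine totalDegree_finsetSum_le fun m hm => ?_
  refine (totalDegree_monomial_le _ _).trans ?_
  exact le_trans (mlExp_sum_le m) (le_totalDegree hm)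

lemma mlred_multilinear (f : MvPolynomial (Fin n) ℝ) (i : Fin n) :
    degreeOf i (mlred f) ≤ 1 := by
  rw [mlred_eq_sum]
  refine (degreeOf_sum_le _ _ _).trans (Finset.sup_le fun m _ => ?_)
  exact (degreeOf_monomial_le _ _ _).trans (min_le_left _ _)

noncomputable def subst (i : Fin n) (b : ℝ) :
    MvPolynomial (Fin n) ℝ →ₐ[ℝ] MvPolynomial (Fin n) ℝ :=
  bind₁ (fun j => if j = i then C b else X j)

lemma subst_X_self (i : Fin n) (b : ℝ) : subst i b (X i) = C b := by
  rw [subst, bind₁_X_right, if_pos rfl]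

lemma subst_X_ne (i : Fin n) (b : ℝ) {j : Fin n} (h : j ≠ i) : subst i b (X j) = X j := by
  rw [subst, bind₁_X_right, if_neg h]

lemma subst_C (i : Fin n) (b : ℝ) (a : ℝ) : subst i b (C a) = C a :=
  bind₁_C_right _ _

lemma subst_monomial (i : Fin n) (b : ℝ) (m : Fin n →₀ ℕ) (a : ℝ) :
    subst i b (monomial m a) = C (b ^ m i) * monomial (m.erase i) a := by
  rw [monomial_eq, monomial_eq, map_mul, subst_C]
  simp only [Finsupp.prod]
  by_cases hi : i ∈ m.support
  · rw [map_prod, ← Finset.mul_prod_erase _ _ hi, map_pow, subst_X_self]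
    have hC : (C b : MvPolynomial (Fin n) ℝ) ^ m i = C (b ^ m i) := by rw [map_pow]
    have hsupp : (m.erase i).support = m.support.erase i := Finsupp.support_erase
    rw [hC, hsupp]
    have : ∏ j ∈ m.support.erase i, subst i b (X j ^ m j)
        = ∏ j ∈ m.support.erase i, X j ^ (m.erase i) j := by
      refine Finset.prod_congr rfl fun j hj => ?_
      have hj' : j ≠ i := Finset.ne_of_mem_erase hj
      rw [map_pow, subst_X_ne i b hj', Finsupp.erase_ne hj']
    rw [this]
    ring
  · have hmi : m i = 0 := Finsupp.notMem_support_iff.mp hi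
    rw [hmi, pow_zero, map_one, one_mul, Finsupp.erase_of_notMem_support hi]
    rw [map_prod]
    congr 1
    refine Finset.prod_congr rfl fun j hj => ?_
    have hj' : j ≠ i := fun h => hi (h ▸ hj)
    rw [map_pow, subst_X_ne i b hj']

lemma subst_monomial_of_ne_zero (i : Fin n) (m : Fin n →₀ ℕ) (a : ℝ) (h : m i ≠ 0) :
    subst i 0 (monomial m a) = 0 := by
  rw [subst_monomial, zero_pow h, map_zero, zero_mul]

lemma subst_monomial_of_zero (i : Fin n) (b : ℝ) (m : Fin n →₀ ℕ) (a : ℝ) (h : m i = 0) :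
    subst i b (monomial m a) = monomial m a := by
  rw [subst_monomial, h, pow_zero, map_one, one_mul,
    Finsupp.erase_of_notMem_support (by simp [Finsupp.mem_support_iff, h])]

lemma subst_one_monomial (i : Fin n) (m : Fin n →₀ ℕ) (a : ℝ) :
    subst i 1 (monomial m a) = monomial (m.erase i) a := by
  rw [subst_monomial, one_pow, map_one, one_mul]

lemma erase_apply_le (m : Fin n →₀ ℕ) (i j : Fin n) : (m.erase i) j ≤ m j := by
  rcases eq_or_ne j i with rfl | hj
  · simp [Finsupp.erase_same]
  · rw [Finsupp.erase_ne hj]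

lemma degreeOf_subst_le (i : Fin n) (b : ℝ) (f : MvPolynomial (Fin n) ℝ) (j : Fin n) :
    degreeOf j (subst i b f) ≤ degreeOf j f := by
  conv_lhs => rw [f.as_sum]
  rw [map_sum]
  refine (degreeOf_sum_le _ _ _).trans (Finset.sup_le fun m hm => ?_)
  rw [subst_monomial]
  refine (degreeOf_mul_le _ _ _).trans ?_
  rw [degreeOf_C]
  refine le_trans ?_ (coeff_le_degreeOf hm j)
  simpa using (degreeOf_monomial_le (m.erase i) _ j).trans (erase_apply_le m i j)

lemma degreeOf_subst_self (i : Fin n) (b : ℝ) (f : MvPolynomial (Fin n) ℝ) :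
    degreeOf i (subst i b f) = 0 := by
  rw [← Nat.le_zero]
  conv_lhs => rw [f.as_sum]
  rw [map_sum]
  refine (degreeOf_sum_le _ _ _).trans (Finset.sup_le fun m _ => ?_)
  rw [subst_monomial]
  refine (degreeOf_mul_le _ _ _).trans ?_
  rw [degreeOf_C]
  simpa [Finsupp.erase_same] using degreeOf_monomial_le (m.erase i) _ i

lemma erase_sum_add (m : Fin n →₀ ℕ) (i : Fin n) :
    ((m.erase i).sum fun _ e => e) + m i = m.sum fun _ e => e := by
  rw [Finsupp.sum_fintype _ _ (fun _ => rfl), Finsupp.sum_fintype _ _ (fun _ => rfl)]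
  rw [← Finset.sum_add_sum_compl {i}]
  have h1 : ∑ j ∈ ({i} : Finset (Fin n)), (m.erase i) j = 0 := by
    simp [Finsupp.erase_same]
  have h2 : ∑ j ∈ ({i} : Finset (Fin n))ᶜ, (m.erase i) j = ∑ j ∈ ({i} : Finset (Fin n))ᶜ, m j := by
    refine Finset.sum_congr rfl fun j hj => ?_
    rw [Finsupp.erase_ne (by simpa using hj)]
  rw [h1, h2, zero_add]
  rw [← Finset.sum_add_sum_compl {i} (fun j => m j)]
  simp [add_comm]

lemma totalDegree_subst_le (i : Fin n) (b : ℝ) (f : MvPolynomial (Fin n) ℝ) :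
    totalDegree (subst i b f) ≤ totalDegree f := by
  conv_lhs => rw [f.as_sum]
  rw [map_sum]
  refine totalDegree_finsetSum_le fun m hm => ?_
  rw [subst_monomial]
  refine (totalDegree_mul _ _).trans ?_
  rw [totalDegree_C, zero_add]
  refine (totalDegree_monomial_le _ _).trans ?_
  refine le_trans ?_ (le_totalDegree hm)
  have := erase_sum_add m i
  simp only [Function.id_def]
  omega

noncomputable def Dop (i : Fin n) (f : MvPolynomial (Fin n) ℝ) : MvPolynomial (Fin n) ℝ :=
  subst i 1 f - subst i 0 f

lemma Dop_add (i : Fin n) (f g : MvPolynomial (Fin n) ℝ) :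
    Dop i (f + g) = Dop i f + Dop i g := by
  simp only [Dop, map_add]; ring

lemma Dop_sum {ι : Type*} (i : Fin n) (s : Finset ι) (f : ι → MvPolynomial (Fin n) ℝ) :
    Dop i (∑ j ∈ s, f j) = ∑ j ∈ s, Dop i (f j) := by
  simp only [Dop, map_sum, Finset.sum_sub_distrib]

lemma degreeOf_Dop_le (i : Fin n) (f : MvPolynomial (Fin n) ℝ) (j : Fin n) :
    degreeOf j (Dop i f) ≤ degreeOf j f := by
  refine (degreeOf_sub_le _ _ _).trans ?_
  exact max_le (degreeOf_subst_le _ _ _ _) (degreeOf_subst_le _ _ _ _)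

lemma degreeOf_Dop_self (i : Fin n) (f : MvPolynomial (Fin n) ℝ) :
    degreeOf i (Dop i f) = 0 := by
  rw [← Nat.le_zero]
  refine (degreeOf_sub_le _ _ _).trans ?_
  simp [degreeOf_subst_self]

lemma subst_of_degreeOf_zero {i : Fin n} (b : ℝ) {f : MvPolynomial (Fin n) ℝ}
    (h : degreeOf i f = 0) : subst i b f = f := by
  conv_lhs => rw [f.as_sum]
  rw [map_sum]
  conv_rhs => rw [f.as_sum]
  refine Finset.sum_congr rfl fun m hm => ?_
  refine subst_monomial_of_zero _ _ _ _ ?_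
  have := coeff_le_degreeOf hm i
  omega

lemma Dop_of_degreeOf_zero {i : Fin n} {f : MvPolynomial (Fin n) ℝ}
    (h : degreeOf i f = 0) : Dop i f = 0 := by
  rw [Dop, subst_of_degreeOf_zero _ h, subst_of_degreeOf_zero _ h, sub_self]

lemma Dop_mul_X (i : Fin n) {j : Fin n} (h : j ≠ i) (f : MvPolynomial (Fin n) ℝ) :
    Dop i (X j * f) = X j * Dop i f := by
  simp only [Dop, map_mul, subst_X_ne i _ h, mul_sub]

lemma Dop_eq_sum (i : Fin n) (f : MvPolynomial (Fin n) ℝ) :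
    Dop i f = ∑ m ∈ f.support.filter (fun m => m i ≠ 0), monomial (m.erase i) (coeff m f) := by
  classical
  set s1 := f.support.filter (fun m => m i ≠ 0) with hs1
  set f1 : MvPolynomial (Fin n) ℝ := ∑ m ∈ s1, monomial m (coeff m f) with hf1
  set f0 : MvPolynomial (Fin n) ℝ :=
    ∑ m ∈ f.support.filter (fun m => ¬ m i ≠ 0), monomial m (coeff m f) with hf0
  have hsplit : f = f1 + f0 := by
    rw [hf1, hf0, hs1, Finset.sum_filter_add_sum_filter_not f.support _ _]
    exact f.as_sum
  have hdeg0 : degreeOf i f0 = 0 := by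
    rw [← Nat.le_zero, hf0]
    refine (degreeOf_sum_le _ _ _).trans (Finset.sup_le fun m hm => ?_)
    simp only [Finset.mem_filter, not_not] at hm
    exact (degreeOf_monomial_le _ _ _).trans (by omega)
  have : Dop i f = Dop i f1 := by
    rw [hsplit, Dop_add, Dop_of_degreeOf_zero hdeg0, add_zero]
  rw [this, hf1, Dop, map_sum, map_sum]
  have hz : ∑ m ∈ s1, subst i 0 (monomial m (coeff m f)) = 0 := by
    refine Finset.sum_eq_zero fun m hm => ?_
    simp only [hs1, Finset.mem_filter] at hm
    exact subst_monomial_of_ne_zero i m _ hm.2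
  rw [hz, sub_zero]
  exact Finset.sum_congr rfl fun m _ => subst_one_monomial i m _

lemma Dop_totalDegree (i : Fin n) (f : MvPolynomial (Fin n) ℝ) :
    Dop i f = 0 ∨ (Dop i f).totalDegree + 1 ≤ f.totalDegree := by
  classical
  by_cases h : Dop i f = 0
  · exact Or.inl h
  right
  set s1 := f.support.filter (fun m => m i ≠ 0) with hs1
  have hne : s1.Nonempty := by
    rcases Finset.eq_empty_or_nonempty s1 with he | hne
    · exfalso; apply h; rw [Dop_eq_sum, ← hs1, he, Finset.sum_empty]
    · exact hne
  obtain ⟨m0, hm0⟩ := hne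
  have hm0' : m0 ∈ f.support ∧ m0 i ≠ 0 := by simpa [hs1, Finset.mem_filter] using hm0
  have ht1 : 1 ≤ f.totalDegree := by
    have h1 := le_totalDegree hm0'.1
    have h2 := apply_le_sum m0 i
    omega
  have hbound : (Dop i f).totalDegree ≤ f.totalDegree - 1 := by
    rw [Dop_eq_sum, ← hs1]
    refine totalDegree_finsetSum_le fun m hm => ?_
    simp only [hs1, Finset.mem_filter] at hm
    refine (totalDegree_monomial_le _ _).trans ?_
    have he := erase_sum_add m i
    have hs := le_totalDegree hm.1
    have := hm.2
    simp only [Function.id_def]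
    omega
  omega

noncomputable def Dlin (i : Fin n) : Module.End ℝ (MvPolynomial (Fin n) ℝ) :=
  (subst i 1).toLinearMap - (subst i 0).toLinearMap

lemma Dlin_apply (i : Fin n) (f : MvPolynomial (Fin n) ℝ) : Dlin i f = Dop i f := rfl

lemma subst_comm {i j : Fin n} (h : i ≠ j) (b c : ℝ) (f : MvPolynomial (Fin n) ℝ) :
    subst i b (subst j c f) = subst j c (subst i b f) := by
  rw [subst, subst, bind₁_bind₁, bind₁_bind₁]
  have hfun : (fun k : Fin n =>
        (bind₁ fun j' => if j' = i then C b else X j')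
          ((fun j' => if j' = j then (C c : MvPolynomial (Fin n) ℝ) else X j') k))
      = (fun k : Fin n =>
        (bind₁ fun j' => if j' = j then C c else X j')
          ((fun j' => if j' = i then (C b : MvPolynomial (Fin n) ℝ) else X j') k)) := by
    funext k
    rcases eq_or_ne k i with rfl | hki <;> rcases eq_or_ne k j with rfl | hkj
    · exact absurd rfl h
    · simp [bind₁_X_right, bind₁_C_right, if_neg hkj]
    · simp [bind₁_X_right, bind₁_C_right, if_neg hki]
    · simp [bind₁_X_right, if_neg hki, if_neg hkj]
  rw [hfun]

lemma Dop_comm {i j : Fin n} (h : i ≠ j) (f : MvPolynomial (Fin n) ℝ) :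
    Dop i (Dop j f) = Dop j (Dop i f) := by
  simp only [Dop, map_sub, subst_comm h]
  ring

lemma Dlin_commute {i j : Fin n} (_h : i ≠ j) : Commute (Dlin i) (Dlin j) := by
  rcases eq_or_ne i j with rfl | h
  · exact Commute.refl _
  · show Dlin i * Dlin j = Dlin j * Dlin i
    refine LinearMap.ext fun f => ?_
    rw [Module.End.mul_apply, Module.End.mul_apply]
    simp only [Dlin_apply]
    exact Dop_comm h f

noncomputable def DS (S : Finset (Fin n)) : Module.End ℝ (MvPolynomial (Fin n) ℝ) :=
  S.noncommProd Dlin (show (S : Set (Fin n)).Pairwise (Function.onFun Commute Dlin) from fun _ _hi _ _hj hij => Dlin_commute hij)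

lemma DS_empty (f : MvPolynomial (Fin n) ℝ) : DS ∅ f = f := by
  rw [DS, Finset.noncommProd_empty]; rfl

lemma DS_insert {i : Fin n} {S : Finset (Fin n)} (h : i ∉ S) (f : MvPolynomial (Fin n) ℝ) :
    DS (insert i S) f = DS S (Dop i f) := by
  rw [DS, Finset.noncommProd_insert_of_notMem' _ _ _ _ h]
  rfl

lemma degreeOf_DS_le (S : Finset (Fin n)) (f : MvPolynomial (Fin n) ℝ) (j : Fin n) :
    degreeOf j (DS S f) ≤ degreeOf j f := by
  induction S using Finset.induction_on generalizing f with
  | empty => rw [DS_empty]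
  | @insert i S hi ih =>
    rw [DS_insert hi]
    exact (ih _).trans (degreeOf_Dop_le _ _ _)

lemma DS_mul_X {i : Fin n} {S : Finset (Fin n)} (h : i ∉ S) (f : MvPolynomial (Fin n) ℝ) :
    DS S (X i * f) = X i * DS S f := by
  induction S using Finset.induction_on generalizing f with
  | empty => rw [DS_empty, DS_empty]
  | @insert k S hk ih =>
    have hki : k ≠ i := fun hh => h (hh ▸ Finset.mem_insert_self k S)
    have hiS : i ∉ S := fun hh => h (Finset.mem_insert_of_mem hh)
    rw [DS_insert hk, DS_insert hk, Dop_mul_X k (Ne.symm hki), ih hiS]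

lemma DS_totalDegree (S : Finset (Fin n)) (f : MvPolynomial (Fin n) ℝ) :
    DS S f = 0 ∨ (DS S f).totalDegree + S.card ≤ f.totalDegree := by
  induction S using Finset.induction_on generalizing f with
  | empty => right; rw [DS_empty]; simp
  | @insert i S hi ih =>
    rw [DS_insert hi, Finset.card_insert_of_notMem hi]
    rcases Dop_totalDegree i f with h | h
    · left; rw [h, map_zero]
    · rcases ih (Dop i f) with h2 | h2
      · left; exact h2
      · right; omega

noncomputable def gS (S : Finset (Fin n)) : MvPolynomial (Fin n) ℝ :=
  ∏ i ∈ S, (X i - (X i) ^ 2)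

lemma gS_empty : gS (∅ : Finset (Fin n)) = 1 := Finset.prod_empty

lemma gS_insert {i : Fin n} {S : Finset (Fin n)} (h : i ∉ S) :
    gS (insert i S) = (X i - (X i) ^ 2) * gS S := Finset.prod_insert h

lemma degreeOf_X_le' (j k : Fin n) : degreeOf j (X k : MvPolynomial (Fin n) ℝ) ≤ 1 := by
  rw [degreeOf_X]
  split <;> omega

lemma degreeOf_gen_le (j k : Fin n) :
    degreeOf j ((X k - (X k) ^ 2 : MvPolynomial (Fin n) ℝ)) ≤ 2 := by
  refine (degreeOf_sub_le _ _ _).trans ?_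
  refine max_le ?_ ?_
  · exact (degreeOf_X_le' _ _).trans (by norm_num)
  · refine (degreeOf_pow_le _ _ _).trans ?_
    have := degreeOf_X_le' j k
    omega

lemma degreeOf_gen_eq_zero {j k : Fin n} (h : j ≠ k) :
    degreeOf j ((X k - (X k) ^ 2 : MvPolynomial (Fin n) ℝ)) = 0 := by
  rw [← Nat.le_zero]
  refine (degreeOf_sub_le _ _ _).trans ?_
  have hX : degreeOf j (X k : MvPolynomial (Fin n) ℝ) = 0 := by
    rw [degreeOf_X, if_neg h]
  refine max_le ?_ ?_
  · simp [hX]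
  · refine (degreeOf_pow_le _ _ _).trans (by simp [hX])

lemma degreeOf_gS_eq_zero {j : Fin n} {S : Finset (Fin n)} (h : j ∉ S) :
    degreeOf j (gS S) = 0 := by
  rw [← Nat.le_zero, gS]
  refine (degreeOf_prod_le _ _ _).trans ?_
  refine le_of_eq (Finset.sum_eq_zero fun k hk => ?_)
  exact degreeOf_gen_eq_zero (fun hh => h (hh ▸ hk))

lemma totalDegree_gS_le (S : Finset (Fin n)) : (gS S).totalDegree ≤ 2 * S.card := by
  rw [gS]
  refine (totalDegree_finset_prod _ _).trans ?_
  rw [Finset.card_eq_sum_ones S, Finset.mul_sum]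
  refine Finset.sum_le_sum fun k _ => ?_
  refine (totalDegree_sub _ _).trans ?_
  refine max_le ?_ ?_
  · rw [totalDegree_X]; omega
  · rw [totalDegree_X_pow]; omega

lemma X_mul_monomial (i : Fin n) (s : Fin n →₀ ℕ) (a : ℝ) :
    X i * monomial s a = monomial (Finsupp.single i 1 + s) a := by
  have h1 : (X i : MvPolynomial (Fin n) ℝ) = monomial (Finsupp.single i 1) 1 := by
    rw [← pow_one (X i)]; exact X_pow_eq_monomial
  rw [h1, monomial_mul, one_mul]

lemma decomp {i : Fin n} {q : MvPolynomial (Fin n) ℝ} (h : degreeOf i q ≤ 1) :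
    q = subst i 0 q + X i * Dop i q := by
  classical
  have hD : X i * Dop i q
      = ∑ m ∈ q.support.filter (fun m => m i ≠ 0), monomial m (coeff m q) := by
    rw [Dop_eq_sum, Finset.mul_sum]
    refine Finset.sum_congr rfl fun m hm => ?_
    simp only [Finset.mem_filter] at hm
    have hm1 : m i = 1 := by
      have := coeff_le_degreeOf hm.1 i
      have := hm.2
      omega
    rw [X_mul_monomial]
    have he : Finsupp.single i 1 + Finsupp.erase i m = m := by
      ext j
      rcases eq_or_ne j i with rfl | hj
      · simp [Finsupp.erase_same, hm1]
      · simp [Finsupp.erase_ne hj, Finsupp.single_apply, Ne.symm hj]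
    rw [he]
  have hA : subst i 0 q
      = ∑ m ∈ q.support.filter (fun m => ¬ m i ≠ 0), monomial m (coeff m q) := by
    conv_lhs => rw [q.as_sum]
    rw [map_sum, ← Finset.sum_filter_add_sum_filter_not q.support (fun m => ¬ m i ≠ 0)]
    have hz : ∑ m ∈ q.support.filter (fun m => ¬ ¬ m i ≠ 0),
        subst i 0 (monomial m (coeff m q)) = 0 := by
      refine Finset.sum_eq_zero fun m hm => ?_
      simp only [Finset.mem_filter, not_not] at hm
      exact subst_monomial_of_ne_zero i m _ hm.2
    rw [hz, add_zero]
    refine Finset.sum_congr rfl fun m hm => ?_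
    simp only [Finset.mem_filter, not_not] at hm
    exact subst_monomial_of_zero i 0 m _ hm.2
  rw [hA, hD, add_comm,
    Finset.sum_filter_add_sum_filter_not q.support (fun m => m i ≠ 0)]
  exact q.as_sum

noncomputable def Mv (V : Finset (Fin n)) (q : MvPolynomial (Fin n) ℝ) :
    MvPolynomial (Fin n) ℝ :=
  ∑ S ∈ V.powerset, (DS S q) ^ 2 * gS S

lemma Mv_term_deg (S : Finset (Fin n)) (q : MvPolynomial (Fin n) ℝ) :
    ((DS S q) ^ 2 * gS S).totalDegree ≤ 2 * q.totalDegree := by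
  rcases DS_totalDegree S q with h | h
  · rw [h]; simp
  · refine (totalDegree_mul _ _).trans ?_
    have h1 : ((DS S q) ^ 2).totalDegree ≤ 2 * (DS S q).totalDegree := totalDegree_pow _ _
    have h2 := totalDegree_gS_le S
    omega

lemma Mv_main (V : Finset (Fin n)) :
    ∀ q : MvPolynomial (Fin n) ℝ, (∀ j, degreeOf j q ≤ 1) → (∀ j ∉ V, degreeOf j q = 0) →
      (Mv V q - q ^ 2 ∈ booleanIdeal n) ∧ (∀ j, degreeOf j (Mv V q) ≤ 1) ∧
        (∀ j ∉ V, degreeOf j (Mv V q) = 0) := by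
  induction V using Finset.induction_on with
  | empty =>
    intro q _hml hv
    have hq0 : ∀ j, degreeOf j q = 0 := fun j => hv j (Finset.notMem_empty j)
    have hMv : Mv ∅ q = q ^ 2 := by
      rw [Mv, Finset.powerset_empty, Finset.sum_singleton, DS_empty, gS_empty, mul_one]
    have hsq : ∀ j, degreeOf j (q ^ 2) = 0 := by
      intro j
      rw [pow_two, ← Nat.le_zero]
      exact (degreeOf_mul_le _ _ _).trans (by simp [hq0 j])
    refine ⟨by rw [hMv, sub_self]; exact Ideal.zero_mem _, ?_, ?_⟩
    · intro j
      rw [hMv, hsq j]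
      omega
    · intro j _
      rw [hMv, hsq j]
  | @insert i V' hi ih =>
    intro q hml hv
    set A := subst i 0 q with hA
    set B := Dop i q with hB
    set CC := A + B with hCC
    have hdecomp : q = A + X i * B := decomp (hml i)
    -- variable facts for A
    have hA_ml : ∀ j, degreeOf j A ≤ 1 := fun j => (degreeOf_subst_le _ _ _ _).trans (hml j)
    have hA_i : degreeOf i A = 0 := degreeOf_subst_self _ _ _
    have hA_v : ∀ j ∉ V', degreeOf j A = 0 := by
      intro j hj
      rcases eq_or_ne j i with rfl | hji
      · exact hA_i
      · have hnm : j ∉ insert i V' := by simp [hji, hj]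
        have e1 := hv j hnm
        have e2 := degreeOf_subst_le i (0:ℝ) q j
        rw [hA]
        omega
    have hB_ml : ∀ j, degreeOf j B ≤ 1 := fun j => (degreeOf_Dop_le _ _ _).trans (hml j)
    have hB_i : degreeOf i B = 0 := degreeOf_Dop_self _ _
    have hB_v : ∀ j ∉ V', degreeOf j B = 0 := by
      intro j hj
      rcases eq_or_ne j i with rfl | hji
      · exact hB_i
      · have hnm : j ∉ insert i V' := by simp [hji, hj]
        have e1 := hv j hnm
        have e2 := degreeOf_Dop_le i q j
        rw [hB]
        omega
    have hC_ml : ∀ j, degreeOf j CC ≤ 1 := by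
      intro j
      refine (degreeOf_add_le _ _ _).trans (max_le (hA_ml j) (hB_ml j))
    have hC_v : ∀ j ∉ V', degreeOf j CC = 0 := by
      intro j hj
      rw [← Nat.le_zero]
      refine (degreeOf_add_le _ _ _).trans ?_
      rw [hA_v j hj, hB_v j hj]
      omega
    obtain ⟨ihA1, ihA2, ihA3⟩ := ih A hA_ml hA_v
    obtain ⟨ihC1, ihC2, ihC3⟩ := ih CC hC_ml hC_v
    -- closed form
    have hinj : ∀ S ∈ V'.powerset, ∀ T ∈ V'.powerset, insert i S = insert i T → S = T := by
      intro S hS T hT hST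
      have hiS : i ∉ S := fun h => hi (Finset.mem_powerset.mp hS h)
      have hiT : i ∉ T := fun h => hi (Finset.mem_powerset.mp hT h)
      have := congrArg (fun (W : Finset (Fin n)) => W.erase i) hST
      simpa [Finset.erase_insert hiS, Finset.erase_insert hiT] using this
    have hdisj : Disjoint V'.powerset (V'.powerset.image (insert i)) := by
      rw [Finset.disjoint_left]
      intro S hS hS2
      rw [Finset.mem_image] at hS2
      obtain ⟨T, _, rfl⟩ := hS2
      exact hi (Finset.mem_powerset.mp hS (Finset.mem_insert_self i T))
    have hterm : ∀ S ∈ V'.powerset,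
        (DS (insert i S) q) ^ 2 * gS (insert i S)
          = (X i - (X i) ^ 2) * ((DS S B) ^ 2 * gS S) := by
      intro S hS
      have hiS : i ∉ S := fun h => hi (Finset.mem_powerset.mp hS h)
      rw [DS_insert hiS, gS_insert hiS, ← hB]
      ring
    have hterm2 : ∀ S ∈ V'.powerset,
        (DS S q) ^ 2 * gS S = (DS S A + X i * DS S B) ^ 2 * gS S := by
      intro S hS
      have hiS : i ∉ S := fun h => hi (Finset.mem_powerset.mp hS h)
      rw [hdecomp, map_add, DS_mul_X hiS]
    have hstep : ∀ S ∈ V'.powerset,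
        ((DS S A + X i * DS S B) ^ 2 * gS S
            + (X i - (X i) ^ 2) * ((DS S B) ^ 2 * gS S))
          = (1 - X i) * ((DS S A) ^ 2 * gS S) + X i * ((DS S CC) ^ 2 * gS S) := by
      intro S _
      rw [hCC, map_add]
      ring
    have key : Mv (insert i V') q = (1 - X i) * Mv V' A + X i * Mv V' CC := by
      simp only [Mv]
      rw [Finset.powerset_insert, Finset.sum_union hdisj, Finset.sum_image hinj,
        Finset.sum_congr rfl hterm, Finset.sum_congr rfl hterm2, ← Finset.sum_add_distrib,
        Finset.sum_congr rfl hstep, Finset.sum_add_distrib, ← Finset.mul_sum, ← Finset.mul_sum]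
    refine ⟨?_, ?_, ?_⟩
    · -- ideal membership
      have heq : Mv (insert i V') q - q ^ 2
          = (1 - X i) * (Mv V' A - A ^ 2) + X i * (Mv V' CC - CC ^ 2)
            - ((X i) ^ 2 - X i) * B ^ 2 := by
        rw [key, hCC]
        nth_rewrite 1 [hdecomp]
        ring
      rw [heq]
      refine Ideal.sub_mem _ (Ideal.add_mem _ ?_ ?_) ?_
      · exact Ideal.mul_mem_left _ _ ihA1
      · exact Ideal.mul_mem_left _ _ ihC1
      · exact Ideal.mul_mem_right _ _ (gen_mem i)
    · -- multilinearity
      intro j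
      rw [key]
      have h1mX : ∀ k, degreeOf k ((1 : MvPolynomial (Fin n) ℝ) - X i) ≤ 1 := by
        intro k
        refine (degreeOf_sub_le _ _ _).trans ?_
        have : degreeOf k (1 : MvPolynomial (Fin n) ℝ) = 0 := by
          simpa using degreeOf_C (1:ℝ) k
        rw [this]
        exact max_le (by omega) (degreeOf_X_le' _ _)
      refine (degreeOf_add_le _ _ _).trans (max_le ?_ ?_)
      · rcases eq_or_ne j i with rfl | hji
        · refine (degreeOf_mul_le _ _ _).trans ?_
          rw [ihA3 j hi]
          exact (h1mX j).trans (by omega)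
        · refine (degreeOf_mul_le _ _ _).trans ?_
          have h0 : degreeOf j ((1 : MvPolynomial (Fin n) ℝ) - X i) = 0 := by
            rw [← Nat.le_zero]
            refine (degreeOf_sub_le _ _ _).trans ?_
            have h1 : degreeOf j (1 : MvPolynomial (Fin n) ℝ) = 0 := by
              simpa using degreeOf_C (1:ℝ) j
            have h2 : degreeOf j (X i : MvPolynomial (Fin n) ℝ) = 0 := by
              rw [degreeOf_X, if_neg hji]
            rw [h1, h2]
            omega
          rw [h0]
          have := ihA2 j
          omega
      · rcases eq_or_ne j i with rfl | hji
        · refine (degreeOf_mul_le _ _ _).trans ?_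
          rw [ihC3 j hi]
          have := degreeOf_X_le' j j
          omega
        · refine (degreeOf_mul_le _ _ _).trans ?_
          have h2 : degreeOf j (X i : MvPolynomial (Fin n) ℝ) = 0 := by
            rw [degreeOf_X, if_neg hji]
          rw [h2]
          have := ihC2 j
          omega
    · -- vanishing outside insert i V'
      intro j hj
      have hji : j ≠ i := fun h => hj (h ▸ Finset.mem_insert_self i V')
      have hjV : j ∉ V' := fun h => hj (Finset.mem_insert_of_mem h)
      rw [key, ← Nat.le_zero]
      refine (degreeOf_add_le _ _ _).trans ?_
      have h2 : degreeOf j (X i : MvPolynomial (Fin n) ℝ) = 0 := by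
        rw [degreeOf_X, if_neg hji]
      have h1 : degreeOf j ((1 : MvPolynomial (Fin n) ℝ) - X i) = 0 := by
        rw [← Nat.le_zero]
        refine (degreeOf_sub_le _ _ _).trans ?_
        have h0 : degreeOf j (1 : MvPolynomial (Fin n) ℝ) = 0 := by
          simpa using degreeOf_C (1:ℝ) j
        rw [h0, h2]
        omega
      have hma := ihA3 j hjV
      have hmc := ihC3 j hjV
      have ha := degreeOf_mul_le j ((1 : MvPolynomial (Fin n) ℝ) - X i) (Mv V' A)
      have hc := degreeOf_mul_le j (X i) (Mv V' CC)
      omega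

end BoolSOS

open BoolSOS in
theorem boolean_sos_to_preordering (n d : ℕ) (p : MvPolynomial (Fin n) ℝ)
    (hmult : ∀ i, p.degreeOf i ≤ 1)
    (hsos : ∃ (m : ℕ) (q : Fin m → MvPolynomial (Fin n) ℝ),
      (∀ j, (q j).totalDegree ≤ d) ∧
      p - ∑ j, (q j) ^ 2 ∈ booleanIdeal n) :
    InPreordering n d p := by
  classical
  obtain ⟨m, q, hdeg, hmem⟩ := hsos
  let r : Fin m → MvPolynomial (Fin n) ℝ := fun j => mlred (q j)
  have hr_ml : ∀ j i, degreeOf i (r j) ≤ 1 := fun j i => mlred_multilinear (q j) i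
  have hr_deg : ∀ j, (r j).totalDegree ≤ d :=
    fun j => (mlred_totalDegree_le (q j)).trans (hdeg j)
  set σ : Finset (Fin n) → MvPolynomial (Fin n) ℝ :=
    fun S => ∑ j, (DS S (r j)) ^ 2 with hσ
  have hgS : ∀ S : Finset (Fin n), (∏ i ∈ S, (X i - (X i) ^ 2)) = gS S := fun S => rfl
  refine ⟨σ, ?_, ?_, ?_⟩
  · intro S
    exact ⟨m, fun j => DS S (r j), rfl⟩
  · intro S
    rw [hgS, hσ, Finset.sum_mul]
    refine totalDegree_finsetSum_le fun j _ => ?_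
    refine (Mv_term_deg S (r j)).trans ?_
    exact Nat.mul_le_mul_left 2 (hr_deg j)
  · -- main equality
    have hMv : ∀ j, Mv Finset.univ (r j) - (r j) ^ 2 ∈ booleanIdeal n ∧
        (∀ i, degreeOf i (Mv Finset.univ (r j)) ≤ 1) := by
      intro j
      obtain ⟨h1, h2, _⟩ := Mv_main Finset.univ (r j) (hr_ml j)
        (fun i hi => absurd (Finset.mem_univ i) hi)
      exact ⟨h1, h2⟩
    set F : MvPolynomial (Fin n) ℝ :=
      ∑ S : Finset (Fin n), σ S * ∏ i ∈ S, (X i - (X i) ^ 2) with hFdef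
    have hF : F = ∑ j, Mv Finset.univ (r j) := by
      rw [hFdef]
      have : ∀ S : Finset (Fin n), σ S * ∏ i ∈ S, (X i - (X i) ^ 2)
          = ∑ j, (DS S (r j)) ^ 2 * gS S := by
        intro S
        rw [hgS, hσ, Finset.sum_mul]
      rw [Finset.sum_congr rfl fun S _ => this S, Finset.sum_comm]
      refine Finset.sum_congr rfl fun j _ => ?_
      rw [Mv, Finset.powerset_univ]
    have hmem2 : p - F ∈ booleanIdeal n := by
      have hsplit : p - F = (p - ∑ j, (q j) ^ 2) + (∑ j, ((q j) ^ 2 - (r j) ^ 2))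
          + (∑ j, ((r j) ^ 2 - Mv Finset.univ (r j))) := by
        rw [hF, Finset.sum_sub_distrib, Finset.sum_sub_distrib]
        ring
      rw [hsplit]
      refine Ideal.add_mem _ (Ideal.add_mem _ hmem ?_) ?_
      · refine Ideal.sum_mem _ fun j _ => ?_
        have : (q j) ^ 2 - (r j) ^ 2 = (q j - r j) * (q j + r j) := by ring
        rw [this]
        exact Ideal.mul_mem_right _ _ (sub_mlred_mem (q j))
      · refine Ideal.sum_mem _ fun j _ => ?_
        have : (r j) ^ 2 - Mv Finset.univ (r j) = -(Mv Finset.univ (r j) - (r j) ^ 2) := by ring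
        rw [this]
        exact neg_mem (hMv j).1
    have hmlF : ∀ i, degreeOf i F ≤ 1 := by
      intro i
      rw [hF]
      refine (degreeOf_sum_le _ _ _).trans (Finset.sup_le fun j _ => (hMv j).2 i)
    have hzero : p - F = 0 := by
      have h1 : mlred (p - F) = 0 := mlred_of_mem_ideal hmem2
      have h2 : mlred (p - F) = p - F := by
        refine mlred_of_multilinear fun i => ?_
        exact (degreeOf_sub_le _ _ _).trans (max_le (hmult i) (hmlF i))
      rw [h2] at h1
      exact h1
    have := sub_eq_zero.mp hzero
    rw [this, hFdef]
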